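/- Let A, B, C be real 2×2 matrices with A symmetric positive definite, B skew-symmetric, and C symmetric, and suppose D := (1/4) B A⁻¹ B + C − μ I is positive semidefinite for a real number μ. If X : ℝ → ℝ² is a C² solution of −A X″ + B X′ + C X = μ X, then the function f(s) = ⟨A X(s), X(s)⟩ is convex, i.e., f″(s) ≥ 0 for all s. -/

import Mathlib

open Matrix

private lemma mulVec_dot' (M : Matrix (Fin 2) (Fin 2) ℝ) (x y : Fin 2 → ℝ) :
    M.mulVec x ⬝ᵥ y = x ⬝ᵥ Mᵀ.mulVec y := by
  rw [mulVec_transpose, dotProduct_comm, dotProduct_mulVec, dotProduct_comm]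

private lemma hasDerivAt_quad' (M : Matrix (Fin 2) (Fin 2) ℝ) {x y : ℝ → Fin 2 → ℝ}
    {x' y' : Fin 2 → ℝ} {s : ℝ} (hx : HasDerivAt x x' s) (hy : HasDerivAt y y' s) :
    HasDerivAt (fun s => M.mulVec (x s) ⬝ᵥ y s)
      (M.mulVec x' ⬝ᵥ y s + M.mulVec (x s) ⬝ᵥ y') s := by
  have hx' := hasDerivAt_pi.1 hx
  have hy' := hasDerivAt_pi.1 hy
  have h : HasDerivAt (fun s => ∑ i, (∑ j, M i j * x s j) * y s i)
      (∑ i, ((∑ j, M i j * x' j) * y s i + (∑ j, M i j * x s j) * y' i)) s := by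
    apply HasDerivAt.fun_sum
    intro i _
    exact (HasDerivAt.fun_sum (fun j _ => (hx' j).const_mul (M i j))).mul (hy' i)
  simp only [mulVec, dotProduct]
  convert h using 1
  rw [← Finset.sum_add_distrib]

private lemma key_nonneg (A B C : Matrix (Fin 2) (Fin 2) ℝ) (μ : ℝ)
    (hA : A.PosDef) (hB : Bᵀ = -B) (hC : Cᵀ = C)
    (hD : ((1/4 : ℝ) • (B * A⁻¹ * B) + C - μ • (1 : Matrix (Fin 2) (Fin 2) ℝ)).PosSemidef)
    (a v w2 : Fin 2 → ℝ)
    (hode : -(A.mulVec w2) + B.mulVec v + C.mulVec a = μ • a) :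
    0 ≤ A.mulVec w2 ⬝ᵥ a + A.mulVec v ⬝ᵥ v + (A.mulVec v ⬝ᵥ v + A.mulVec a ⬝ᵥ w2) := by
  have hAT : Aᵀ = A := by have := hA.1; simp at this; exact this.eq
  have hdet : IsUnit A.det := hA.det_pos.ne'.isUnit
  have hAinv : A * A⁻¹ = 1 := Matrix.mul_nonsing_inv A hdet
  set w : Fin 2 → ℝ := B.mulVec a with hw
  set z : Fin 2 → ℝ := A⁻¹.mulVec w with hzdef
  set u : Fin 2 → ℝ := v - (1/2 : ℝ) • z with hu
  set D : Matrix (Fin 2) (Fin 2) ℝ :=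
    (1/4 : ℝ) • (B * A⁻¹ * B) + C - μ • (1 : Matrix (Fin 2) (Fin 2) ℝ) with hDdef
  have hz : A.mulVec z = w := by
    rw [hzdef, mulVec_mulVec, hAinv, one_mulVec]
  have hw2 : A.mulVec w2 = B.mulVec v + C.mulVec a - μ • a := by
    rw [← hode]; abel
  -- basic dot product identities
  have h1 : B.mulVec v ⬝ᵥ a = -(v ⬝ᵥ w) := by
    rw [mulVec_dot', hB, Matrix.neg_mulVec, dotProduct_neg, hw]
  have h2 : A.mulVec a ⬝ᵥ w2 = A.mulVec w2 ⬝ᵥ a := by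
    rw [mulVec_dot', hAT, dotProduct_comm]
  have hAvz : A.mulVec v ⬝ᵥ z = v ⬝ᵥ w := by
    rw [mulVec_dot', hAT, hz]
  have hwv : w ⬝ᵥ v = v ⬝ᵥ w := dotProduct_comm _ _
  have h3 : A.mulVec u ⬝ᵥ u = A.mulVec v ⬝ᵥ v - v ⬝ᵥ w + (1/4) * (w ⬝ᵥ z) := by
    rw [hu, Matrix.mulVec_sub, Matrix.mulVec_smul, hz]
    simp only [sub_dotProduct, dotProduct_sub, smul_dotProduct, dotProduct_smul, smul_eq_mul]
    linear_combination (-1/2) * hAvz + (-1/2) * hwv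
  have hBABa : (B * A⁻¹ * B).mulVec a ⬝ᵥ a = -(w ⬝ᵥ z) := by
    have : (B * A⁻¹ * B).mulVec a = B.mulVec z := by
      rw [hzdef, mulVec_mulVec, hw, mulVec_mulVec]
    rw [this, mulVec_dot', hB, Matrix.neg_mulVec, dotProduct_neg, ← hw, dotProduct_comm]
  have h4 : D.mulVec a ⬝ᵥ a = -(1/4) * (w ⬝ᵥ z) + C.mulVec a ⬝ᵥ a - μ * (a ⬝ᵥ a) := by
    rw [hDdef, Matrix.sub_mulVec, Matrix.add_mulVec, Matrix.smul_mulVec,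
      Matrix.smul_mulVec, Matrix.one_mulVec]
    simp only [sub_dotProduct, add_dotProduct, smul_dotProduct, smul_eq_mul]
    linear_combination (1/4) * hBABa
  have hmain : A.mulVec w2 ⬝ᵥ a + A.mulVec v ⬝ᵥ v + (A.mulVec v ⬝ᵥ v + A.mulVec a ⬝ᵥ w2)
      = 2 * (A.mulVec u ⬝ᵥ u) + 2 * (D.mulVec a ⬝ᵥ a) := by
    rw [h2, hw2]
    simp only [add_dotProduct, sub_dotProduct, smul_dotProduct, smul_eq_mul]
    linear_combination 2 * h1 - 2 * h3 - 2 * h4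
  rw [hmain]
  have hposA : 0 ≤ A.mulVec u ⬝ᵥ u := by
    have := hA.posSemidef.dotProduct_mulVec_nonneg u
    simpa [dotProduct_comm] using this
  have hposD : 0 ≤ D.mulVec a ⬝ᵥ a := by
    have := hD.dotProduct_mulVec_nonneg a
    simpa [dotProduct_comm] using this
  linarith

/-- If A is symmetric positive definite, B skew, C symmetric, and
D = (1/4)BA⁻¹B + C − μI is positive semidefinite, then for any C² solution X of
−AX″ + BX′ + CX = μX, the function f(s) = ⟨AX(s), X(s)⟩ is convex (f″ ≥ 0). -/
theorem stmt3 (A B C : Matrix (Fin 2) (Fin 2) ℝ) (μ : ℝ)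
    (hA : A.PosDef) (hB : Bᵀ = -B) (hC : Cᵀ = C)
    (hD : ((1/4 : ℝ) • (B * A⁻¹ * B) + C - μ • (1 : Matrix (Fin 2) (Fin 2) ℝ)).PosSemidef)
    (X : ℝ → Fin 2 → ℝ) (hX : ContDiff ℝ 2 X)
    (hODE : ∀ s, -(A.mulVec (deriv (deriv X) s)) + B.mulVec (deriv X s)
        + C.mulVec (X s) = μ • X s) :
    (∀ s, 0 ≤ deriv (deriv (fun s => A.mulVec (X s) ⬝ᵥ X s)) s)
    ∧ ConvexOn ℝ Set.univ (fun s => A.mulVec (X s) ⬝ᵥ X s) := by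
  -- differentiability of X and deriv X
  have h2 : ContDiff ℝ (1 + 1 : WithTop ℕ∞) X := by
    have : ((1:WithTop ℕ∞) + 1) = 2 := by norm_num
    rw [this]; exact hX
  rw [contDiff_succ_iff_deriv] at h2
  have hX1 : Differentiable ℝ X := h2.1
  have hX2 : Differentiable ℝ (deriv X) := h2.2.2.differentiable (by norm_num)
  set X' : ℝ → Fin 2 → ℝ := deriv X with hX'def
  set X'' : ℝ → Fin 2 → ℝ := deriv (deriv X) with hX''def
  have hdX : ∀ s, HasDerivAt X (X' s) s := fun s => (hX1 s).hasDerivAt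
  have hdX' : ∀ s, HasDerivAt X' (X'' s) s := fun s => (hX2 s).hasDerivAt
  set f : ℝ → ℝ := fun s => A.mulVec (X s) ⬝ᵥ X s with hfdef
  set g : ℝ → ℝ := fun s => A.mulVec (X' s) ⬝ᵥ X s + A.mulVec (X s) ⬝ᵥ X' s with hgdef
  have hdf : ∀ s, HasDerivAt f (g s) s := fun s => hasDerivAt_quad' A (hdX s) (hdX s)
  have hderivf : deriv f = g := funext fun s => (hdf s).deriv
  have hdg : ∀ s, HasDerivAt g
      ((A.mulVec (X'' s) ⬝ᵥ X s + A.mulVec (X' s) ⬝ᵥ X' s)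
        + (A.mulVec (X' s) ⬝ᵥ X' s + A.mulVec (X s) ⬝ᵥ X'' s)) s := fun s =>
    (hasDerivAt_quad' A (hdX' s) (hdX s)).add (hasDerivAt_quad' A (hdX s) (hdX' s))
  have hderiv2 : ∀ s, deriv (deriv f) s
      = A.mulVec (X'' s) ⬝ᵥ X s + A.mulVec (X' s) ⬝ᵥ X' s
        + (A.mulVec (X' s) ⬝ᵥ X' s + A.mulVec (X s) ⬝ᵥ X'' s) := by
    intro s
    rw [hderivf]
    exact (hdg s).deriv
  have hnonneg : ∀ s, 0 ≤ deriv (deriv f) s := by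
    intro s
    rw [hderiv2 s]
    exact key_nonneg A B C μ hA hB hC hD (X s) (X' s) (X'' s) (hODE s)
  refine ⟨hnonneg, ?_⟩
  apply convexOn_of_deriv2_nonneg convex_univ
  · exact (Differentiable.continuous (fun s => (hdf s).differentiableAt)).continuousOn
  · exact (fun s _ => ((hdf s).differentiableAt).differentiableWithinAt)
  · intro s _
    rw [hderivf]
    exact ((hdg s).differentiableAt).differentiableWithinAt
  · intro s _
    have : deriv^[2] f s = deriv (deriv f) s := rfl
    rw [this]
    exact hnonneg s
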